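/- Fix an integer k ≥ 1, a real h ≥ 1, and a real κ with 0 < κ < 1, and set x := 2(1−κ^2)/κ^2. Let L_k(κ,h) be the (k+3)×(k+3) real symmetric matrix given in block form by L_k(κ,h) = [[A, B], [Bᵀ, C]], where A is the 2×2 matrix [[1,1],[1,2]], B is the 2×(k+1) matrix whose first row is (1,1,…,1) and whose second row is (2,1,…,1), and C is the (k+1)×(k+1) matrix with (1,1) entry 2/κ^2 and (i,j) entry 1/((i+j−2)h+1) + 1 for (i,j) ≠ (1,1) (1-based indices). Then L_k(κ,h) is positive semidefinite if and only if the generalized Hilbert matrix A_k(x,h) is positive semidefinite. -/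

import Mathlib

open Matrix


/-- The generalized Hilbert matrix `A_k(x,h)`: a `(k+1) × (k+1)` real matrix whose
`(i,j)` entry (0-based) is `x` if `i = j = 0` and `1/((i+j)h+1)` otherwise. -/
noncomputable def genHilbert (k : ℕ) (x h : ℝ) : Matrix (Fin (k + 1)) (Fin (k + 1)) ℝ :=
  fun i j =>
    if i = 0 ∧ j = 0 then x
    else 1 / ((((i : ℕ) : ℝ) + ((j : ℕ) : ℝ)) * h + 1)

/-- The `(k+3) × (k+3)` matrix `L_k(κ,h)`, given in block form by `[[A, B], [Bᵀ, C]]`,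
where `A = [[1,1],[1,2]]`, `B` is the `2 × (k+1)` matrix with first row `(1,…,1)` and
second row `(2,1,…,1)`, and `C` is the `(k+1) × (k+1)` matrix whose `(1,1)` entry
(1-based) is `2/κ²` and whose `(i,j)` entry for `(i,j) ≠ (1,1)` is `1/((i+j−2)h+1) + 1`.
Indices of `L_k` below are 0-based: the block `C` occupies indices `≥ 2`. -/
noncomputable def Lmat (k : ℕ) (κ h : ℝ) : Matrix (Fin (k + 3)) (Fin (k + 3)) ℝ :=
  fun i j =>
    if (i : ℕ) < 2 then
      if (j : ℕ) < 2 then (if (i : ℕ) = 1 ∧ (j : ℕ) = 1 then 2 else 1)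
      else (if (i : ℕ) = 1 ∧ (j : ℕ) = 2 then 2 else 1)
    else
      if (j : ℕ) < 2 then (if (j : ℕ) = 1 ∧ (i : ℕ) = 2 then 2 else 1)
      else if (i : ℕ) = 2 ∧ (j : ℕ) = 2 then 2 / κ ^ 2
      else 1 / (((((i : ℕ) - 2) + ((j : ℕ) - 2) : ℕ) : ℝ) * h + 1) + 1

noncomputable def Amat : Matrix (Fin 2) (Fin 2) ℝ := !![1,1;1,2]
noncomputable def Bmat (k : ℕ) : Matrix (Fin 2) (Fin (k+1)) ℝ :=
  fun p j => if p = 1 ∧ j = 0 then 2 else 1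
noncomputable def Cmat (k : ℕ) (κ h : ℝ) : Matrix (Fin (k+1)) (Fin (k+1)) ℝ :=
  fun i j => if i = 0 ∧ j = 0 then 2 / κ ^ 2
    else 1 / ((((i : ℕ) : ℝ) + ((j : ℕ) : ℝ)) * h + 1) + 1

lemma Amat_inv : Amat⁻¹ = !![2,-1;-1,1] := by
  apply Matrix.inv_eq_right_inv
  ext i j
  fin_cases i <;> fin_cases j <;>
    simp [Amat, Matrix.mul_apply, Fin.sum_univ_two] <;> norm_num

lemma Amat_det : Amat.det = 1 := by
  simp [Amat, Matrix.det_fin_two]; norm_num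

lemma Amat_posDef : Amat.PosDef := by
  rw [Matrix.posDef_iff_dotProduct_mulVec]
  constructor
  · ext i j; fin_cases i <;> fin_cases j <;> simp [Amat]
  · intro v hv
    have hform : star v ⬝ᵥ Amat *ᵥ v = (v 0 + v 1)^2 + (v 1)^2 := by
      simp [Amat, Matrix.mulVec, dotProduct, Fin.sum_univ_two]
      ring
    rw [hform]
    rcases eq_or_ne (v 1) 0 with h1 | h1
    · have h0 : v 0 ≠ 0 := by
        intro h0; apply hv; funext i; fin_cases i <;> simp [h0, h1]
      have : (0:ℝ) < (v 0 + v 1)^2 := by rw [h1, add_zero]; positivity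
      nlinarith [sq_nonneg (v 1)]
    · have : (0:ℝ) < (v 1)^2 := by positivity
      nlinarith [sq_nonneg (v 0 + v 1)]

theorem Lmat_posSemidef_iff_genHilbert_posSemidef
    (k : ℕ) (hk : 1 ≤ k) (h : ℝ) (hh : 1 ≤ h)
    (κ : ℝ) (hκ0 : 0 < κ) (hκ1 : κ < 1)
    (x : ℝ) (hx : x = 2 * (1 - κ ^ 2) / κ ^ 2) :
    (Lmat k κ h).PosSemidef ↔ (genHilbert k x h).PosSemidef := by
  have hκ2 : κ^2 ≠ 0 := pow_ne_zero _ hκ0.ne'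
  have h3 : 2 + (k + 1) = k + 3 := by omega
  let e : Fin 2 ⊕ Fin (k+1) ≃ Fin (k+3) := finSumFinEquiv.trans (finCongr h3)
  have hel : ∀ p : Fin 2, ((e (Sum.inl p)) : ℕ) = (p : ℕ) := by
    intro p; simp [e]
  have her : ∀ q : Fin (k+1), ((e (Sum.inr q)) : ℕ) = 2 + (q : ℕ) := by
    intro q; simp [e]; omega
  have hsub : (Lmat k κ h).submatrix e e =
      Matrix.fromBlocks Amat (Bmat k) (Bmat k)ᴴ (Cmat k κ h) := by
    ext i j
    rcases i with p | q <;> rcases j with p' | q' <;>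
      simp only [Matrix.submatrix_apply, Matrix.fromBlocks_apply₁₁,
        Matrix.fromBlocks_apply₁₂, Matrix.fromBlocks_apply₂₁, Matrix.fromBlocks_apply₂₂,
        Lmat, Amat, Bmat, Cmat, Matrix.conjTranspose_apply, star_trivial, hel, her]
    · rw [if_pos p.is_lt, if_pos p'.is_lt]
      fin_cases p <;> fin_cases p' <;> norm_num
    · rw [if_pos p.is_lt, if_neg (by omega)]
      have : ((p:ℕ) = 1 ∧ 2 + (q':ℕ) = 2) ↔ (p = 1 ∧ q' = 0) := by
        simp only [Fin.ext_iff, Fin.val_one, Fin.val_zero]; omega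
      simp only [this]
    · rw [if_neg (by omega), if_pos p'.is_lt]
      have : ((p':ℕ) = 1 ∧ 2 + (q:ℕ) = 2) ↔ (p' = 1 ∧ q = 0) := by
        simp only [Fin.ext_iff, Fin.val_one, Fin.val_zero]; omega
      simp only [this]
    · rw [if_neg (by omega), if_neg (by omega)]
      have h00 : (2 + (q:ℕ) = 2 ∧ 2 + (q':ℕ) = 2) ↔ (q = 0 ∧ q' = 0) := by
        simp only [Fin.ext_iff, Fin.val_zero]; omega
      simp only [h00]
      by_cases hc : q = 0 ∧ q' = 0
      · simp [hc]
      · rw [if_neg hc, if_neg hc]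
        have harith : (2 + (q:ℕ) - 2) + (2 + (q':ℕ) - 2) = (q:ℕ) + (q':ℕ) := by omega
        rw [harith]; push_cast; ring_nf
  haveI hAinv : Invertible Amat :=
    Amat.invertibleOfIsUnitDet (by rw [Amat_det]; exact isUnit_one)
  have hschur : Cmat k κ h - (Bmat k)ᴴ * Amat⁻¹ * Bmat k = genHilbert k x h := by
    ext i j
    have hB : ∀ (p : Fin 2) (j : Fin (k+1)), Bmat k p j = if p = 1 ∧ j = 0 then 2 else 1 :=
      fun _ _ => rfl
    have hmul : ((Bmat k)ᴴ * Amat⁻¹ * Bmat k) i j =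
        (if i = 0 then (2:ℝ) else 1) * (if j = 0 then (2:ℝ) else 1)
          - (if i = 0 then (2:ℝ) else 1) - (if j = 0 then (2:ℝ) else 1) + 2 := by
      rw [Amat_inv]
      simp only [Matrix.mul_apply, Fin.sum_univ_two, Matrix.conjTranspose_apply,
        star_trivial, hB]
      by_cases hi : i = 0 <;> by_cases hj : j = 0 <;>
        simp [hi, hj] <;> norm_num
    rw [Matrix.sub_apply, hmul]
    by_cases hi : i = 0 <;> by_cases hj : j = 0 <;>
      simp only [Cmat, genHilbert, hi, hj, and_self, and_true, true_and,
        and_false, false_and, if_true, if_false]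
    · rw [hx]; field_simp; ring
    · ring
    · ring
    · ring
  calc (Lmat k κ h).PosSemidef
      ↔ ((Lmat k κ h).submatrix e e).PosSemidef := (Matrix.posSemidef_submatrix_equiv e).symm
    _ ↔ (Matrix.fromBlocks Amat (Bmat k) (Bmat k)ᴴ (Cmat k κ h)).PosSemidef := by rw [hsub]
    _ ↔ (Cmat k κ h - (Bmat k)ᴴ * Amat⁻¹ * Bmat k).PosSemidef :=
        Matrix.PosDef.fromBlocks₁₁ _ _ Amat_posDef
    _ ↔ (genHilbert k x h).PosSemidef := by rw [hschur]
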